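/- arXiv:2601.22286 — 2 statements merged into one kernel-verified Lean document; each statement's English description precedes it below -/
import Mathlib

section
/- Let A ≅ F₂ⁿ be a finite Boolean group with a symmetric nondegenerate F₂-bilinear form β. Consider the real matrix M indexed by nonzero elements a, b of A with entries M[a,b] = β(a,b) ∈ {0,1} ⊂ ℝ. Then M has full rank, i.e., rank |A| − 1. -/
private lemma zmod2_pow_add (u v : ZMod 2) :
    ((-1:ℝ))^(u+v).val = (-1:ℝ)^u.val * (-1:ℝ)^v.val := by
  rw [ZMod.val_add]; have hu := u.val_lt; have hv := v.val_lt
  generalize u.val = a at *; generalize v.val = b at *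
  interval_cases a <;> interval_cases b <;> norm_num

private lemma zmod2_pow_eq (u : ZMod 2) : ((-1:ℝ))^u.val = 1 - 2*(u.val:ℝ) := by
  fin_cases u <;>
    simp [ZMod.val] <;> norm_num

/-- For a finite Boolean group `A ≅ F₂ⁿ` with a symmetric nondegenerate
bilinear form `β`, the real matrix `M` indexed by the nonzero elements of `A` with
entries `M[a,b] = β(a,b) ∈ {0,1} ⊂ ℝ` has full rank `|A| − 1`. -/
theorem bilinear_form_matrix_full_rank
    (A : Type*) [AddCommGroup A] [Module (ZMod 2) A] [Fintype A] [DecidableEq A]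
    (β : A →ₗ[ZMod 2] A →ₗ[ZMod 2] ZMod 2)
    (hsymm : ∀ x y : A, β x y = β y x)
    (hnd : ∀ x : A, x ≠ 0 → ∃ y : A, β x y = 1) :
    (Matrix.of fun (a b : {x : A // x ≠ 0}) => ((β a.1 b.1).val : ℝ)).rank =
      Fintype.card A - 1 := by
  classical
  set M := Matrix.of fun (a b : {x : A // x ≠ 0}) => ((β a.1 b.1).val : ℝ) with hM
  -- characteristic two
  have h2 : ∀ b : A, b + b = 0 := by
    intro b
    have h := two_smul (ZMod 2) b
    rwa [show ((2:ZMod 2)) = 0 from rfl, zero_smul, eq_comm] at h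
  have hneg : ∀ b : A, -b = b := fun b => neg_eq_of_add_eq_zero_left (h2 b)
  set C : Matrix A A ℝ := Matrix.of (fun a b => (-1:ℝ)^(β a b).val) with hC
  -- the character sum
  have hsum : ∀ c : A, c ≠ 0 → ∑ b : A, (-1:ℝ)^(β c b).val = 0 := by
    intro c hc
    obtain ⟨y, hy⟩ := hnd c hc
    have h1 : ∑ b : A, (-1:ℝ)^(β c b).val = ∑ b : A, (-1:ℝ)^(β c (b + y)).val :=
      Fintype.sum_bijective (· + y) (Equiv.addRight y).bijective _ _
        (fun b => by rw [add_assoc, h2, add_zero])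
    have h3 : ∀ b : A, (-1:ℝ)^(β c (b + y)).val = -((-1:ℝ)^(β c b).val) := by
      intro b
      rw [map_add, hy, zmod2_pow_add]
      norm_num [show ((1:ZMod 2)).val=1 from rfl]
    simp_rw [h3] at h1
    rw [Finset.sum_neg_distrib] at h1
    linarith
  -- orthogonality : C * C = card A • 1
  have horth : C * C = (Fintype.card A : ℝ) • 1 := by
    ext a b
    rw [Matrix.mul_apply]
    have hterm : ∀ c : A, C a c * C c b = (-1:ℝ)^(β (a+b) c).val := by
      intro c
      simp only [hC, Matrix.of_apply]
      rw [map_add, LinearMap.add_apply, zmod2_pow_add, hsymm b c]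
    simp_rw [hterm]
    by_cases hab : a = b
    · subst hab
      have : a + a = 0 := h2 a
      simp [this, Matrix.one_apply, map_zero]
    · have hab' : a + b ≠ 0 := by
        intro h
        exact hab (by rw [← hneg b]; exact eq_neg_of_add_eq_zero_left h)
      rw [hsum _ hab']
      simp [Matrix.one_apply, hab]
  -- injectivity of mulVec by C
  have hcard0 : (0:ℝ) < (Fintype.card A : ℝ) := by
    exact_mod_cast Fintype.card_pos
  have hCinj : ∀ v w : A → ℝ, C.mulVec v = C.mulVec w → v = w := by
    intro v w h
    have h' := congrArg C.mulVec h
    rw [Matrix.mulVec_mulVec, Matrix.mulVec_mulVec, horth, Matrix.smul_mulVec,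
      Matrix.smul_mulVec, Matrix.one_mulVec, Matrix.one_mulVec] at h'
    exact smul_right_injective (A → ℝ) (ne_of_gt hcard0) h'
  -- determinant nonzero
  have hdet : M.det ≠ 0 := by
    intro hd
    obtain ⟨v, hv0, hv⟩ := Matrix.exists_mulVec_eq_zero_iff.mpr hd
    set v' : A → ℝ := fun a => if h : a = 0 then 0 else v ⟨a, h⟩ with hv'
    set S : ℝ := ∑ a : A, v' a with hS
    have hMv' : ∀ a : A, ∑ b : A, ((β a b).val : ℝ) * v' b = 0 := by
      intro a
      by_cases ha : a = 0
      · subst ha; simp [map_zero]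
      · have hsplit := Finset.sum_filter_add_sum_filter_not Finset.univ (fun b : A => b ≠ 0)
          (fun b => ((β a b).val : ℝ) * v' b)
        have hz : ∑ b ∈ Finset.univ.filter (fun b : A => ¬ b ≠ 0),
            ((β a b).val : ℝ) * v' b = 0 := by
          apply Finset.sum_eq_zero
          intro b hb
          simp only [Finset.mem_filter, not_not] at hb
          simp [hb.2, hv']
        have hsub : ∑ b ∈ Finset.univ.filter (fun b : A => b ≠ 0),
            ((β a b).val : ℝ) * v' b
            = ∑ b : {x : A // x ≠ 0}, ((β a b.1).val : ℝ) * v' b.1 :=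
          Finset.sum_subtype _ (fun x => by simp) _
        have hMva := congrFun hv ⟨a, ha⟩
        simp only [Matrix.mulVec, dotProduct, hM, Matrix.of_apply, Pi.zero_apply] at hMva
        have : ∀ b : {x : A // x ≠ 0}, v' b.1 = v b := by
          intro b; simp [hv', b.2]
        rw [← hsplit, hz, hsub, add_zero]
        simp_rw [this]
        exact hMva
    set w : A → ℝ := fun b => if b = 0 then S else 0 with hw
    have hCv' : C.mulVec v' = C.mulVec w := by
      funext a
      have hL : C.mulVec v' a = S := by
        simp only [Matrix.mulVec, dotProduct, hC, Matrix.of_apply]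
        have : ∀ b : A, (-1:ℝ)^(β a b).val * v' b = v' b - 2 * (((β a b).val : ℝ) * v' b) := by
          intro b; rw [zmod2_pow_eq]; ring
        simp_rw [this]
        rw [Finset.sum_sub_distrib, ← Finset.mul_sum, hMv' a, mul_zero, sub_zero]
      have hR : C.mulVec w a = S := by
        simp only [Matrix.mulVec, dotProduct, hC, hw, Matrix.of_apply,
          mul_ite, mul_zero]
        rw [Finset.sum_ite_eq' Finset.univ (0:A)]
        simp [map_zero]
      rw [hL, hR]
    have hvz := hCinj _ _ hCv'
    apply hv0
    funext b
    have hb := congrFun hvz b.1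
    simp only [hv', hw, b.2, dif_neg, not_false_iff, if_neg] at hb
    rw [show v b = v ⟨b.1, b.2⟩ from rfl]
    exact hb
  have hunit : IsUnit M := (Matrix.isUnit_iff_isUnit_det M).mpr (Ne.isUnit hdet)
  rw [Matrix.rank_of_isUnit M hunit]
  have h1 : Fintype.card {x : A // x ≠ 0} = Fintype.card A - Fintype.card {x : A // x = 0} :=
    Fintype.card_subtype_compl _
  rw [h1, Fintype.card_subtype_eq]
end

section
/- Let X be a real-valued random variable with a ≤ X ≤ b almost surely and E[X] = μ. Then for every t ≥ 0, E[e^{tX}] ≤ exp(t²(b−a)²/8 + tμ). (Hoeffding's lemma.) -/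
open Real

section Key
variable {δ : ℝ}

private noncomputable def dfun (δ u : ℝ) : ℝ := 1 - δ + δ * exp u
private noncomputable def φfun (δ u : ℝ) : ℝ := δ * exp u / dfun δ u
private noncomputable def gfun (δ u : ℝ) : ℝ := Real.log (dfun δ u) - δ * u

lemma dfun_pos (h0 : 0 < δ) (h1 : δ < 1) (u : ℝ) : 0 < dfun δ u := by
  have := exp_pos u
  unfold dfun; nlinarith

lemma hasDerivAt_φ (h0 : 0 < δ) (h1 : δ < 1) (u : ℝ) :
    HasDerivAt (φfun δ) (φfun δ u * (1 - φfun δ u)) u := by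
  have hd := dfun_pos h0 h1 u
  have hn : HasDerivAt (fun u => δ * exp u) (δ * exp u) u :=
    (Real.hasDerivAt_exp u).const_mul δ
  have hden : HasDerivAt (dfun δ) (δ * exp u) u := by
    have : HasDerivAt (fun u => 1 - δ + δ * exp u) (δ * exp u) u := hn.const_add _
    exact this
  have h := hn.div hden hd.ne'
  refine h.congr_deriv ?_
  have he := exp_pos u
  unfold φfun dfun at *
  field_simp

lemma hasDerivAt_g (h0 : 0 < δ) (h1 : δ < 1) (u : ℝ) :
    HasDerivAt (gfun δ) (φfun δ u - δ) u := by
  have hd := dfun_pos h0 h1 u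
  have hden : HasDerivAt (dfun δ) (δ * exp u) u :=
    ((Real.hasDerivAt_exp u).const_mul δ).const_add _
  have hlog := hden.log hd.ne'
  have := hlog.sub ((hasDerivAt_id u).const_mul δ)
  refine this.congr_deriv ?_
  unfold φfun
  ring_nf

lemma φ_deriv_le (h0 : 0 < δ) (h1 : δ < 1) (u : ℝ) :
    φfun δ u * (1 - φfun δ u) ≤ 1 / 4 := by nlinarith [sq_nonneg (φfun δ u - 1/2)]

lemma φ_zero (h0 : 0 < δ) (h1 : δ < 1) : φfun δ 0 = δ := by
  unfold φfun dfun; simp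

lemma gderiv_le (h0 : 0 < δ) (h1 : δ < 1) {s : ℝ} (hs : 0 ≤ s) :
    φfun δ s - δ ≤ s / 4 := by
  have hmono : MonotoneOn (fun s => s / 4 - (φfun δ s - δ)) (Set.Ici 0) := by
    apply monotoneOn_of_hasDerivWithinAt_nonneg (convex_Ici 0)
      (f' := fun s => 1 / 4 - φfun δ s * (1 - φfun δ s))
    · intro x hx
      exact (((hasDerivAt_id x).div_const 4).sub
        ((hasDerivAt_φ h0 h1 x).sub_const δ)).continuousAt.continuousWithinAt
    · intro x _
      exact ((((hasDerivAt_id x).div_const 4).sub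
        ((hasDerivAt_φ h0 h1 x).sub_const δ)).hasDerivWithinAt)
    · intro x _
      have := φ_deriv_le h0 h1 x
      linarith
  have := hmono (Set.self_mem_Ici) hs hs
  simp [φ_zero h0 h1] at this
  linarith

lemma g_le (h0 : 0 < δ) (h1 : δ < 1) {u : ℝ} (hu : 0 ≤ u) :
    gfun δ u ≤ u ^ 2 / 8 := by
  have hmono : MonotoneOn (fun s => s ^ 2 / 8 - gfun δ s) (Set.Ici 0) := by
    apply monotoneOn_of_hasDerivWithinAt_nonneg (convex_Ici 0)
      (f' := fun s => s / 4 - (φfun δ s - δ))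
    · intro x hx
      have h : HasDerivAt (fun s => s ^ 2 / 8 - gfun δ s) (x / 4 - (φfun δ x - δ)) x := by
        have h1' : HasDerivAt (fun s : ℝ => s ^ 2 / 8) (x / 4) x := by
          have := ((hasDerivAt_pow 2 x).div_const 8)
          refine this.congr_deriv ?_; ring
        exact h1'.sub (hasDerivAt_g h0 h1 x)
      exact h.continuousAt.continuousWithinAt
    · intro x hx
      have h1' : HasDerivAt (fun s : ℝ => s ^ 2 / 8) (x / 4) x := by
        have := ((hasDerivAt_pow 2 x).div_const 8)
        refine this.congr_deriv ?_; ring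
      exact (h1'.sub (hasDerivAt_g h0 h1 x)).hasDerivWithinAt
    · intro x hx
      have hx0 : (0:ℝ) ≤ x := le_of_lt (by simpa using hx)
      have := gderiv_le h0 h1 hx0
      linarith
  have := hmono (Set.self_mem_Ici) hu hu
  have hg0 : gfun δ 0 = 0 := by unfold gfun dfun; simp
  simp [hg0] at this
  linarith

lemma key_ineq (h0 : 0 ≤ δ) (h1 : δ ≤ 1) {u : ℝ} (hu : 0 ≤ u) :
    (1 - δ) * exp (-δ * u) + δ * exp ((1 - δ) * u) ≤ exp (u ^ 2 / 8) := by
  rcases eq_or_lt_of_le h0 with h0 | h0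
  · simp only [← h0]
    simp
    positivity
  rcases eq_or_lt_of_le h1 with h1 | h1
  · simp only [h1]
    simp
    positivity
  have hd := dfun_pos h0 h1 u
  have hsplit : exp ((1 - δ) * u) = exp u * exp (-δ * u) := by
    rw [← Real.exp_add]; ring_nf
  have hg : exp (gfun δ u) = (1 - δ + δ * exp u) * exp (-δ * u) := by
    rw [gfun, Real.exp_sub, Real.exp_log hd, dfun, div_eq_mul_inv, ← Real.exp_neg, neg_mul]
  have hmain : (1 - δ) * exp (-δ * u) + δ * exp ((1 - δ) * u) = exp (gfun δ u) := by
    rw [hg, hsplit]; ring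
  rw [hmain]
  exact Real.exp_le_exp.2 (g_le h0 h1 hu)

end Key



open MeasureTheory

/-- Hoeffding's lemma: if `a ≤ X ≤ b` almost surely and `E[X] = m`,
then for every `t ≥ 0`, `E[e^{tX}] ≤ exp(t²(b−a)²/8 + t·m)`. -/
theorem hoeffding_lemma
    {Ω : Type*} [MeasurableSpace Ω] (μ : Measure Ω) [IsProbabilityMeasure μ]
    (X : Ω → ℝ) (hX : Measurable X) (a b m t : ℝ) (ht : 0 ≤ t)
    (hab : ∀ᵐ ω ∂μ, a ≤ X ω ∧ X ω ≤ b)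
    (hm : (∫ ω, X ω ∂μ) = m) :
    (∫ ω, Real.exp (t * X ω) ∂μ) ≤
      Real.exp (t ^ 2 * (b - a) ^ 2 / 8 + t * m) := by
  have haea : ∀ᵐ ω ∂μ, a ≤ X ω := hab.mono fun ω h => h.1
  have haeb : ∀ᵐ ω ∂μ, X ω ≤ b := hab.mono fun ω h => h.2
  have hXint : Integrable X μ := by
    apply (integrable_const (max |a| |b|)).mono' hX.aestronglyMeasurable
    filter_upwards [hab] with ω h
    have h1 := neg_abs_le a; have h2 := le_abs_self b
    have h3 := le_max_left |a| |b|; have h4 := le_max_right |a| |b|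
    rw [Real.norm_eq_abs, abs_le]
    constructor <;> [linarith [h.1]; linarith [h.2]]
  have ham : a ≤ m := by
    rw [← hm]
    have := integral_mono_ae (integrable_const a) hXint haea
    simpa using this
  have hmb : m ≤ b := by
    rw [← hm]
    have := integral_mono_ae hXint (integrable_const b) haeb
    simpa using this
  rcases eq_or_lt_of_le (ham.trans hmb) with heq | hlt
  · -- a = b case
    have hXa : ∀ᵐ ω ∂μ, X ω = a := by
      filter_upwards [hab] with ω h
      exact le_antisymm (heq ▸ h.2) h.1
    have hieq : (∫ ω, Real.exp (t * X ω) ∂μ) = Real.exp (t * a) := by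
      rw [integral_congr_ae (hXa.mono fun ω h => by rw [h])]
      simp
    have hma : m = a := le_antisymm (heq ▸ hmb) ham
    rw [hieq, hma, ← heq]
    simp
  · have hba : (0:ℝ) < b - a := sub_pos.2 hlt
    -- pointwise convexity bound
    have hpt : ∀ᵐ ω ∂μ, Real.exp (t * X ω) ≤
        ((b - X ω) * Real.exp (t * a) + (X ω - a) * Real.exp (t * b)) / (b - a) := by
      filter_upwards [hab] with ω h
      set x := X ω
      have hl : (0:ℝ) ≤ (b - x) / (b - a) := div_nonneg (by linarith [h.2]) hba.le
      have hl' : (0:ℝ) ≤ (x - a) / (b - a) := div_nonneg (by linarith [h.1]) hba.le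
      have hsum : (b - x) / (b - a) + (x - a) / (b - a) = 1 := by
        field_simp
        ring
      have := convexOn_exp.2 (Set.mem_univ (t * a)) (Set.mem_univ (t * b)) hl hl' hsum
      simp only [smul_eq_mul] at this
      have harg : (b - x) / (b - a) * (t * a) + (x - a) / (b - a) * (t * b) = t * x := by
        field_simp; ring
      rw [harg] at this
      calc Real.exp (t * x) ≤ (b - x)/(b - a) * Real.exp (t * a)
            + (x - a)/(b - a) * Real.exp (t * b) := this
        _ = ((b - x) * Real.exp (t * a) + (x - a) * Real.exp (t * b)) / (b - a) := by ring
    have hintexp : Integrable (fun ω => Real.exp (t * X ω)) μ := by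
      apply (integrable_const (Real.exp (t * b))).mono'
        (hX.const_mul t).exp.aestronglyMeasurable
      filter_upwards [haeb] with ω h
      rw [Real.norm_eq_abs, abs_of_pos (Real.exp_pos _)]
      exact Real.exp_le_exp.2 (by nlinarith)
    have hint2 : Integrable
        (fun ω => ((b - X ω) * Real.exp (t * a) + (X ω - a) * Real.exp (t * b)) / (b - a)) μ :=
      ((((integrable_const b).sub hXint).mul_const _).add
        ((hXint.sub (integrable_const a)).mul_const _)).div_const _
    have hI : (∫ ω, Real.exp (t * X ω) ∂μ) ≤
        ((b - m) * Real.exp (t * a) + (m - a) * Real.exp (t * b)) / (b - a) := by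
      refine (integral_mono_ae hintexp hint2 hpt).trans_eq ?_
      have h1i : Integrable (fun ω => (b - X ω) * Real.exp (t * a)) μ :=
        ((integrable_const b).sub hXint).mul_const _
      have h2i : Integrable (fun ω => (X ω - a) * Real.exp (t * b)) μ :=
        (hXint.sub (integrable_const a)).mul_const _
      have e1 : (∫ ω, (b - X ω) ∂μ) = b - m := by
        rw [integral_sub (integrable_const b) hXint, hm]; simp
      have e2 : (∫ ω, (X ω - a) ∂μ) = m - a := by
        rw [integral_sub hXint (integrable_const a), hm]; simp
      rw [integral_div, integral_add h1i h2i, integral_mul_const, integral_mul_const, e1, e2]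
    refine hI.trans ?_
    set δ := (m - a) / (b - a) with hδdef
    set u := t * (b - a) with hudef
    have h0 : 0 ≤ δ := div_nonneg (by linarith) hba.le
    have h1 : δ ≤ 1 := (div_le_one hba).2 (by linarith)
    have hu : 0 ≤ u := mul_nonneg ht hba.le
    have hkey := key_ineq h0 h1 hu
    have hδu : δ * u = t * (m - a) := by
      rw [hδdef, hudef]; field_simp
    have he1 : Real.exp (-δ * u) = Real.exp (t * a) * Real.exp (-(t * m)) := by
      rw [← Real.exp_add]; congr 1; rw [neg_mul, hδu]; ring
    have he2 : Real.exp ((1 - δ) * u) = Real.exp (t * b) * Real.exp (-(t * m)) := by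
      rw [← Real.exp_add]; congr 1
      have : (1 - δ) * u = u - δ * u := by ring
      rw [this, hδu, hudef]; ring
    have h1δ : 1 - δ = (b - m) / (b - a) := by
      rw [hδdef]; field_simp; ring
    have heq2 : (1 - δ) * Real.exp (-δ * u) + δ * Real.exp ((1 - δ) * u) =
        (((b - m) * Real.exp (t * a) + (m - a) * Real.exp (t * b)) / (b - a)) *
          Real.exp (-(t * m)) := by
      rw [he1, he2, h1δ, hδdef]; ring
    rw [heq2] at hkey
    have hepos : 0 < Real.exp (-(t * m)) := Real.exp_pos _
    calc ((b - m) * Real.exp (t * a) + (m - a) * Real.exp (t * b)) / (b - a)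
        = (((b - m) * Real.exp (t * a) + (m - a) * Real.exp (t * b)) / (b - a)) *
            Real.exp (-(t * m)) * Real.exp (t * m) := by
          rw [mul_assoc, ← Real.exp_add]; simp
      _ ≤ Real.exp (u ^ 2 / 8) * Real.exp (t * m) := by
          exact mul_le_mul_of_nonneg_right hkey (Real.exp_pos _).le
      _ = Real.exp (t ^ 2 * (b - a) ^ 2 / 8 + t * m) := by
          rw [← Real.exp_add, hudef]; ring_nf
end
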